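/- Let 2 < p ≤ ∞ and let F ∈ L^p([−π, π]). For f(z) = (1/2π) ∫_{−π}^{π} F(t) e^{−izt} dt one has, with 1/p + 1/q = 1, the bound |f(x + iy)| ≤ (1/2π) ‖F‖_{L^p([−π,π])} ((e^{πqy} − e^{−πqy})/(qy))^{1/q} for all x ∈ ℝ and y ≠ 0, and consequently lim_{|y| → ∞} sup_{x ∈ ℝ} |f(x + iy)| / √((e^{2πy} − e^{−2πy})/(4πy)) = 0. -/

import Mathlib

open MeasureTheory

/-- The Paley–Wiener transform `f(z) = (1/2π) ∫_{−π}^{π} F(t) e^{−izt} dt`. -/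
noncomputable def pwTransform (F : ℝ → ℂ) (z : ℂ) : ℂ :=
  (1 / (2 * Real.pi) : ℝ) •
    ∫ t in Set.Icc (-Real.pi) Real.pi, F t * Complex.exp (-Complex.I * z * t)

/-- The diagonal of the Paley–Wiener reproducing kernel:
`K(z, z̄) = (e^{2πy} − e^{−2πy})/(4πy)` for `z = x + iy`, interpreted as `1` when `y = 0`. -/
noncomputable def pwKernelDiag (y : ℝ) : ℝ :=
  if y = 0 then 1
  else (Real.exp (2 * Real.pi * y) - Real.exp (-(2 * Real.pi * y))) / (4 * Real.pi * y)

lemma exp_integral_Icc (c : ℝ) (hc : c ≠ 0) :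
    ∫ t in Set.Icc (-Real.pi) Real.pi, Real.exp (c * t) =
      (Real.exp (Real.pi * c) - Real.exp (-(Real.pi * c))) / c := by
  rw [MeasureTheory.integral_Icc_eq_integral_Ioc,
    ← intervalIntegral.integral_of_le (by linarith [Real.pi_pos] : -Real.pi ≤ Real.pi),
    intervalIntegral.integral_comp_mul_left (fun x => Real.exp x) hc,
    integral_exp]
  rw [smul_eq_mul]
  rw [mul_comm Real.pi c, show c * -Real.pi = -(c * Real.pi) by ring]
  field_simp

lemma q_facts (p : ENNReal) (hp : 2 < p) (q : ℝ) (hq : 1 / p.toReal + 1 / q = 1) :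
    1 ≤ q ∧ q < 2 ∧ (1 : ENNReal) / 1 = 1 / ENNReal.ofReal q + 1 / p := by
  rcases eq_or_ne p ⊤ with hptop | hptop
  · subst hptop
    simp only [ENNReal.toReal_top, div_zero, zero_add] at hq
    have hq1 : q = 1 := by
      have : q ≠ 0 := by intro h; rw [h] at hq; simp at hq
      field_simp at hq; linarith
    subst hq1
    norm_num
  · have hpt : 2 < p.toReal := by
      rw [show (2:ℝ) = (2:ENNReal).toReal by norm_num]
      exact (ENNReal.toReal_lt_toReal (by norm_num) hptop).mpr hp
    have hpt0 : 0 < p.toReal := by linarith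
    have h1 : 1 / p.toReal < 1 / 2 := by
      apply one_div_lt_one_div_of_lt <;> linarith
    have h2 : 0 < 1 / p.toReal := by positivity
    have hq12 : 1 / 2 < 1 / q := by linarith
    have hq1 : 1 / q < 1 := by linarith
    have hq0 : 0 < q := by
      by_contra h
      push_neg at h
      have : 1 / q ≤ 0 := div_nonpos_of_nonneg_of_nonpos zero_le_one h
      linarith
    have hqq : q * (1 / q) = 1 := by field_simp
    refine ⟨by nlinarith, by nlinarith, ?_⟩
    have hp0 : p ≠ 0 := by positivity
    have hP : p = ENNReal.ofReal p.toReal := (ENNReal.ofReal_toReal hptop).symm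
    rw [hP, ENNReal.div_eq_inv_mul, ENNReal.div_eq_inv_mul, ENNReal.div_eq_inv_mul]
    rw [mul_one, mul_one, mul_one]
    rw [← ENNReal.ofReal_inv_of_pos hq0, ← ENNReal.ofReal_inv_of_pos hpt0,
      ← ENNReal.ofReal_add (by positivity) (by positivity)]
    rw [show q⁻¹ + (p.toReal)⁻¹ = 1 by rw [← one_div, ← one_div]; linarith]
    simp

lemma pw_pointwise_bound (p : ENNReal) (hp : 2 < p) (F : ℝ → ℂ)
    (hF : MemLp F p (volume.restrict (Set.Icc (-Real.pi) Real.pi)))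
    (q : ℝ) (hq : 1 / p.toReal + 1 / q = 1) (x y : ℝ) (hy : y ≠ 0) :
    ‖pwTransform F (x + y * Complex.I)‖ ≤
      (1 / (2 * Real.pi)) *
        (eLpNorm F p (volume.restrict (Set.Icc (-Real.pi) Real.pi))).toReal *
          ((Real.exp (Real.pi * q * y) - Real.exp (-(Real.pi * q * y))) / (q * y)) ^ (1 / q) := by
  obtain ⟨hq1, hq2, hpq⟩ := q_facts p hp q hq
  have hq0 : 0 < q := by linarith
  set μ := volume.restrict (Set.Icc (-Real.pi) Real.pi) with hμ
  set z : ℂ := (x : ℂ) + y * Complex.I with hz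
  set g : ℝ → ℂ := fun t => Complex.exp (-Complex.I * z * t) with hg
  have hgnorm : ∀ t : ℝ, ‖g t‖ = Real.exp (y * t) := by
    intro t
    rw [hg]
    simp only [Complex.norm_exp]
    congr 1
    simp [hz, Complex.mul_re, Complex.mul_im]
  have hgc : Continuous g := by fun_prop
  set q' : ENNReal := ENNReal.ofReal q with hq'
  have hq'0 : q' ≠ 0 := by
    simp [hq', ENNReal.ofReal_eq_zero]; linarith
  have hq'top : q' ≠ ⊤ := ENNReal.ofReal_ne_top
  have hq'toReal : q'.toReal = q := ENNReal.toReal_ofReal hq0.le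
  -- the constant M
  set c : ℝ := q * y with hc
  have hc0 : c ≠ 0 := mul_ne_zero hq0.ne' hy
  set M : ℝ := (Real.exp (Real.pi * c) - Real.exp (-(Real.pi * c))) / c with hM
  have hM0 : 0 < M := by
    rcases lt_or_gt_of_ne hc0 with h | h
    · apply div_pos_of_neg_of_neg _ h
      have : Real.pi * c < -(Real.pi * c) := by nlinarith [Real.pi_pos]
      simp only [sub_neg]
      exact Real.exp_lt_exp.mpr this
    · apply div_pos _ h
      have : -(Real.pi * c) < Real.pi * c := by nlinarith [Real.pi_pos]
      simp only [sub_pos]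
      exact Real.exp_lt_exp.mpr this
  -- eLpNorm of g
  have hgq : eLpNorm g q' μ = ENNReal.ofReal (M ^ (1 / q)) := by
    rw [eLpNorm_eq_lintegral_rpow_enorm_toReal hq'0 hq'top, hq'toReal]
    have h1 : ∀ t : ℝ, ‖g t‖ₑ ^ q = ENNReal.ofReal (Real.exp (c * t)) := by
      intro t
      rw [← ofReal_norm,
        ENNReal.ofReal_rpow_of_pos (by rw [hgnorm]; exact Real.exp_pos _), hgnorm,
        ← Real.exp_mul]
      congr 1
      rw [hc]; ring
    simp_rw [h1]
    have hint : Integrable (fun t : ℝ => Real.exp (c * t)) μ := by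
      rw [hμ]
      exact (Real.continuous_exp.comp (continuous_const.mul continuous_id)).integrableOn_Icc
    rw [← MeasureTheory.ofReal_integral_eq_lintegral_ofReal hint
      (Filter.Eventually.of_forall fun t => (Real.exp_pos _).le)]
    rw [hμ, exp_integral_Icc c hc0, ← hM,
      ENNReal.ofReal_rpow_of_pos hM0]
  -- Hölder
  have hFg : (fun t : ℝ => F t * g t) = g • F := by
    funext t; simp [mul_comm]
  have holder : eLpNorm (g • F) 1 μ ≤ eLpNorm g q' μ * eLpNorm F p μ :=
    eLpNorm_smul_le_mul_eLpNorm hF.1 hgc.aestronglyMeasurable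
      (hpqr := ⟨by simpa [one_div] using hpq.symm⟩)
  -- main chain
  have step1 : ‖pwTransform F z‖ ≤
      (1 / (2 * Real.pi)) * (eLpNorm (g • F) 1 μ).toReal := by
    rw [pwTransform, norm_smul, Real.norm_eq_abs,
      abs_of_pos (by positivity : (0:ℝ) < 1 / (2 * Real.pi))]
    gcongr
    calc ‖∫ t in Set.Icc (-Real.pi) Real.pi, F t * Complex.exp (-Complex.I * z * t)‖
        ≤ (∫⁻ t, ENNReal.ofReal ‖F t * Complex.exp (-Complex.I * z * t)‖ ∂μ).toReal :=
          norm_integral_le_lintegral_norm _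
      _ = (eLpNorm (g • F) 1 μ).toReal := by
          rw [eLpNorm_one_eq_lintegral_enorm, ← hFg]
          congr 1
          refine lintegral_congr fun t => ?_
          rw [ofReal_norm]
  refine step1.trans ?_
  rw [mul_assoc]
  gcongr
  calc (eLpNorm (g • F) 1 μ).toReal ≤ (eLpNorm g q' μ * eLpNorm F p μ).toReal := by
        apply ENNReal.toReal_mono _ holder
        exact ENNReal.mul_ne_top (by rw [hgq]; exact ENNReal.ofReal_ne_top) hF.2.ne
    _ = (eLpNorm F p μ).toReal * M ^ (1 / q) := by
        rw [ENNReal.toReal_mul, hgq, ENNReal.toReal_ofReal (by positivity), mul_comm]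
    _ = (eLpNorm F p μ).toReal *
        ((Real.exp (Real.pi * q * y) - Real.exp (-(Real.pi * q * y))) / (q * y)) ^ (1 / q) := by
        rw [hM, hc]; ring_nf

lemma mgen_abs (c : ℝ) (hc : c ≠ 0) :
    (Real.exp (Real.pi * c) - Real.exp (-(Real.pi * c))) / c =
      (Real.exp (Real.pi * |c|) - Real.exp (-(Real.pi * |c|))) / |c| := by
  rcases lt_or_gt_of_ne hc with h | h
  · rw [abs_of_neg h, mul_neg, neg_neg]
    rw [div_neg, eq_comm, neg_eq_iff_eq_neg, ← neg_div]
    ring_nf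
  · rw [abs_of_pos h]

/-- **Hölder estimate and decay for `F ∈ Lᵖ([−π,π])`, `2 < p ≤ ∞`.**
Let `2 < p ≤ ∞` and `F ∈ Lᵖ([−π, π])`, and let `q` be the conjugate exponent
(`1/p + 1/q = 1`; for `p = ∞` one has `q = 1`, which the `toReal` convention `1/∞ = 0`
encodes). Then for `f(z) = (1/2π)∫ F(t)e^{−izt} dt` one has the bound
`|f(x+iy)| ≤ (1/2π) ‖F‖_p ((e^{πqy} − e^{−πqy})/(qy))^{1/q}` for all `x ∈ ℝ`, `y ≠ 0`, and
consequently `sup_x |f(x+iy)| / √((e^{2πy} − e^{−2πy})/(4πy)) → 0` as `|y| → ∞`. -/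
theorem stmt14 (p : ENNReal) (hp : 2 < p) (F : ℝ → ℂ)
    (hF : MemLp F p (volume.restrict (Set.Icc (-Real.pi) Real.pi)))
    (q : ℝ) (hq : 1 / p.toReal + 1 / q = 1) :
    (∀ (x y : ℝ), y ≠ 0 →
      ‖pwTransform F (x + y * Complex.I)‖ ≤
        (1 / (2 * Real.pi)) *
          (eLpNorm F p (volume.restrict (Set.Icc (-Real.pi) Real.pi))).toReal *
            ((Real.exp (Real.pi * q * y) - Real.exp (-(Real.pi * q * y))) / (q * y)) ^
              (1 / q)) ∧
    Filter.Tendsto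
      (fun y : ℝ =>
        (⨆ x : ℝ, ‖pwTransform F (x + y * Complex.I)‖) /
          Real.sqrt (pwKernelDiag y))
      (Filter.comap (fun y : ℝ => |y|) Filter.atTop) (nhds 0) := by
  obtain ⟨hq1, hq2, -⟩ := q_facts p hp q hq
  have hq0 : 0 < q := by linarith
  have key := pw_pointwise_bound p hp F hF q hq
  refine ⟨key, ?_⟩
  have hπ := Real.pi_pos
  have hπ3 := Real.pi_gt_three
  set C : ℝ := (1 / (2 * Real.pi)) *
    (eLpNorm F p (volume.restrict (Set.Icc (-Real.pi) Real.pi))).toReal with hC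
  have hC0 : 0 ≤ C := by positivity
  set e : ℝ := 1 / 2 - 1 / q with he
  set D : ℝ := C * Real.sqrt (8 * Real.pi) * q ^ (-(1 / q)) with hD
  have hD0 : 0 ≤ D := by positivity
  set S : ℝ → ℝ := fun y => ⨆ x : ℝ, ‖pwTransform F (x + y * Complex.I)‖ with hS
  have hS0 : ∀ y, 0 ≤ S y := fun y => Real.iSup_nonneg fun x => norm_nonneg _
  have hh0 : ∀ y, 0 ≤ S y / Real.sqrt (pwKernelDiag y) := fun y =>
    div_nonneg (hS0 y) (Real.sqrt_nonneg _)
  -- the dominating function tends to 0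
  have htend : Filter.Tendsto (fun u : ℝ => D * u ^ e) Filter.atTop (nhds 0) := by
    have h0 : Filter.Tendsto (fun u : ℝ => u ^ e) Filter.atTop (nhds 0) := by
      rw [show e = -(1 / q - 1 / 2) by rw [he]; ring]
      apply tendsto_rpow_neg_atTop
      have : 1 / 2 < 1 / q := by
        apply one_div_lt_one_div_of_lt hq0 hq2
      linarith
    have := h0.const_mul D
    simpa using this
  have hcomp : Filter.Tendsto (fun y : ℝ => D * |y| ^ e)
      (Filter.comap (fun y : ℝ => |y|) Filter.atTop) (nhds 0) :=
    htend.comp Filter.tendsto_comap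
  have hev : ∀ᶠ y in Filter.comap (fun y : ℝ => |y|) Filter.atTop, (1:ℝ) ≤ |y| :=
    Filter.tendsto_comap.eventually (Filter.eventually_ge_atTop 1)
  refine squeeze_zero' (Filter.Eventually.of_forall hh0) ?_ hcomp
  filter_upwards [hev] with y hu
  -- main estimate for 1 ≤ |y|
  set u : ℝ := |y| with huy
  have hu0 : 0 < u := by linarith
  have hy0 : y ≠ 0 := by
    intro h
    rw [huy, h, abs_zero] at hu
    norm_num at hu
  -- rewrite the quantities in terms of u
  have hMq : (Real.exp (Real.pi * q * y) - Real.exp (-(Real.pi * q * y))) / (q * y) =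
      (Real.exp (Real.pi * (q * u)) - Real.exp (-(Real.pi * (q * u)))) / (q * u) := by
    have := mgen_abs (q * y) (mul_ne_zero hq0.ne' hy0)
    rw [abs_mul, abs_of_pos hq0] at this
    rw [show Real.pi * q * y = Real.pi * (q * y) by ring]
    exact this
  have hK : pwKernelDiag y = (Real.exp (2 * Real.pi * u) - Real.exp (-(2 * Real.pi * u))) /
      (4 * Real.pi * u) := by
    rw [pwKernelDiag, if_neg hy0]
    have := mgen_abs (2 * y) (by simpa using hy0)
    rw [abs_mul, abs_of_pos (by norm_num : (0:ℝ) < 2)] at this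
    have h2 : (Real.exp (Real.pi * (2 * y)) - Real.exp (-(Real.pi * (2 * y)))) / (2 * y) =
        (Real.exp (Real.pi * (2 * u)) - Real.exp (-(Real.pi * (2 * u)))) / (2 * u) := this
    rw [show 2 * Real.pi * y = Real.pi * (2 * y) by ring,
      show 2 * Real.pi * u = Real.pi * (2 * u) by ring,
      show 4 * Real.pi * y = (Real.pi * (2 * y)) * 2 by ring,
      show 4 * Real.pi * u = (Real.pi * (2 * u)) * 2 by ring]
    rw [show Real.pi * (2 * y) * 2 = (2 * y) * (2 * Real.pi) by ring,
      show Real.pi * (2 * u) * 2 = (2 * u) * (2 * Real.pi) by ring,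
      ← div_div, ← div_div, h2, div_div, div_div]
  -- lower bound for the kernel
  have hexp2 : (2:ℝ) ≤ Real.exp (2 * Real.pi * u) := by
    have h1 : 2 * Real.pi * u + 1 ≤ Real.exp (2 * Real.pi * u) := by
      linarith [Real.add_one_le_exp (2 * Real.pi * u)]
    nlinarith [mul_nonneg hπ.le (by linarith : (0:ℝ) ≤ u - 1)]
  have hexpneg : Real.exp (-(2 * Real.pi * u)) ≤ 1 := by
    rw [show (1:ℝ) = Real.exp 0 by simp]
    refine Real.exp_le_exp.mpr ?_
    have : 0 ≤ 2 * Real.pi * u := by positivity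
    linarith
  have hKlb : Real.exp (2 * Real.pi * u) / (8 * Real.pi * u) ≤ pwKernelDiag y := by
    rw [hK]
    rw [div_le_div_iff₀ (by positivity) (by positivity)]
    have hw : (0:ℝ) < Real.pi * u := by positivity
    nlinarith [mul_nonneg hw.le
      (by linarith : (0:ℝ) ≤ Real.exp (2 * Real.pi * u) - 2 * Real.exp (-(2 * Real.pi * u)))]
  have hsqrtK : Real.exp (Real.pi * u) / Real.sqrt (8 * Real.pi * u) ≤
      Real.sqrt (pwKernelDiag y) := by
    refine le_trans (le_of_eq ?_) (Real.sqrt_le_sqrt hKlb)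
    rw [Real.sqrt_div (Real.exp_pos _).le]
    congr 1
    rw [show 2 * Real.pi * u = Real.pi * u + Real.pi * u by ring, Real.exp_add,
      Real.sqrt_mul_self (Real.exp_pos _).le]
  have hsqrtK0 : 0 < Real.exp (Real.pi * u) / Real.sqrt (8 * Real.pi * u) := by positivity
  -- upper bound for S y
  have hSB : S y ≤ C * (Real.exp (Real.pi * u) * (q * u) ^ (-(1 / q))) := by
    have h1 : S y ≤ C * ((Real.exp (Real.pi * (q * u)) - Real.exp (-(Real.pi * (q * u)))) /
        (q * u)) ^ (1 / q) := by
      apply ciSup_le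
      intro x
      have := key x y hy0
      rw [hMq] at this
      exact this
    refine h1.trans ?_
    gcongr C * ?_
    have hnum : (Real.exp (Real.pi * (q * u)) - Real.exp (-(Real.pi * (q * u)))) / (q * u) ≤
        Real.exp (Real.pi * (q * u)) / (q * u) := by
      exact (div_le_div_iff_of_pos_right (by positivity)).mpr
        (by linarith [Real.exp_pos (-(Real.pi * (q * u)))])
    have hnn : 0 ≤ (Real.exp (Real.pi * (q * u)) - Real.exp (-(Real.pi * (q * u)))) / (q * u) := by
      apply div_nonneg _ (by positivity)
      have hpos : (0:ℝ) ≤ Real.pi * (q * u) := by positivity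
      have : Real.exp (-(Real.pi * (q * u))) ≤ Real.exp (Real.pi * (q * u)) :=
        Real.exp_le_exp.mpr (by linarith)
      linarith
    calc ((Real.exp (Real.pi * (q * u)) - Real.exp (-(Real.pi * (q * u)))) / (q * u)) ^ (1 / q)
        ≤ (Real.exp (Real.pi * (q * u)) / (q * u)) ^ (1 / q) :=
          Real.rpow_le_rpow hnn hnum (by positivity)
      _ = Real.exp (Real.pi * u) * (q * u) ^ (-(1 / q)) := by
          rw [Real.div_rpow (Real.exp_pos _).le (by positivity)]
          rw [← Real.exp_mul, show Real.pi * (q * u) * (1 / q) = Real.pi * u by field_simp]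
          rw [Real.rpow_neg (by positivity), div_eq_mul_inv]
  -- combine
  calc S y / Real.sqrt (pwKernelDiag y)
      ≤ (C * (Real.exp (Real.pi * u) * (q * u) ^ (-(1 / q)))) /
        (Real.exp (Real.pi * u) / Real.sqrt (8 * Real.pi * u)) :=
        div_le_div₀ (by positivity) hSB hsqrtK0 hsqrtK
    _ = D * u ^ e := by
        rw [Real.mul_rpow hq0.le hu0.le, hD, he]
        rw [div_div_eq_mul_div, show (8:ℝ) * Real.pi * u = (8 * Real.pi) * u by ring,
          Real.sqrt_mul (by positivity) u, Real.sqrt_eq_rpow u]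
        rw [div_eq_iff (Real.exp_pos (Real.pi * u)).ne']
        rw [show (1:ℝ)/2 - 1/q = 1/2 + (-(1/q)) by ring, Real.rpow_add hu0]
        ring
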